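/- Stieltjes inversion for an absolutely continuous measure: if μ has a continuous bounded density f on ℝ and S(z) = ∫ f(t)/(t−z) dt for Im z > 0, then for every x ∈ ℝ, lim_{y→0⁺} (1/π)·Im S(x+iy) = f(x). -/

import Mathlib

open Real MeasureTheory Filter Complex

theorem stieltjes_inversion (f : ℝ → ℝ)
    (hf_cont : Continuous f) (hf_bdd : ∃ C, ∀ t, |f t| ≤ C)
    (hf_int : Integrable f) (hf_nonneg : ∀ t, 0 ≤ f t)
    (S : ℂ → ℂ) (hS : ∀ z : ℂ, 0 < z.im → S z = ∫ t : ℝ, (f t : ℂ) / ((t : ℂ) - z))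
    (x : ℝ) :
    Tendsto (fun y : ℝ => (1 / Real.pi) * (S (x + y * Complex.I)).im)
      (nhdsWithin 0 (Set.Ioi 0)) (nhds (f x)) := by
  set φ : ℝ → ℝ → ℝ := fun y t => (1 / Real.pi) * (y / ((t - x) ^ 2 + y ^ 2)) with hφdef
  have hπ : (0 : ℝ) < Real.pi := Real.pi_pos
  -- main peak-function convergence
  have key : Tendsto (fun y : ℝ => ∫ t : ℝ, φ y t • f t)
      (nhdsWithin 0 (Set.Ioi 0)) (nhds (f x)) := by
    apply tendsto_integral_peak_smul_of_integrable_of_tendsto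
      (t := Metric.closedBall x 1) measurableSet_closedBall
      (Metric.closedBall_mem_nhds x one_pos)
      (by simp [Real.closedBall_eq_Icc])
    · -- nonneg
      filter_upwards [self_mem_nhdsWithin] with y hy t
      have hy' : (0 : ℝ) < y := hy
      have hden : (0 : ℝ) < (t - x) ^ 2 + y ^ 2 := by positivity
      positivity
    · -- uniform convergence away from x
      intro u hu hxu
      rw [Metric.tendstoUniformlyOn_iff]
      intro ε hε
      obtain ⟨δ, hδ, hball⟩ := Metric.isOpen_iff.1 hu x hxu
      have h1 : Tendsto (fun y : ℝ => (1 / Real.pi) * (y / δ ^ 2))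
          (nhdsWithin 0 (Set.Ioi 0)) (nhds 0) := by
        have hc : Continuous fun y : ℝ => (1 / Real.pi) * (y / δ ^ 2) := by
          continuity
        have := (hc.tendsto 0).mono_left (nhdsWithin_le_nhds (s := Set.Ioi (0:ℝ)))
        simpa using this
      filter_upwards [h1.eventually (gt_mem_nhds hε), self_mem_nhdsWithin] with y h1y hy t ht
      have hy' : (0 : ℝ) < y := hy
      have habs : δ ≤ |t - x| := by
        by_contra h
        push_neg at h
        exact ht (hball (by simpa [Metric.mem_ball, Real.dist_eq] using h))
      have hsq : δ ^ 2 ≤ (t - x) ^ 2 := by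
        have := pow_le_pow_left₀ hδ.le habs 2
        simpa [_root_.sq_abs] using this
      have hden : δ ^ 2 ≤ (t - x) ^ 2 + y ^ 2 := by nlinarith
      have hφle : φ y t ≤ (1 / Real.pi) * (y / δ ^ 2) := by
        apply mul_le_mul_of_nonneg_left _ (by positivity)
        exact div_le_div_of_nonneg_left hy'.le (by positivity) hden
      have hφnn : 0 ≤ φ y t := by
        have hd : (0 : ℝ) < (t - x) ^ 2 + y ^ 2 := by positivity
        positivity
      simp only [Pi.zero_apply, dist_zero_left, Real.norm_eq_abs, _root_.abs_of_nonneg hφnn]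
      exact lt_of_le_of_lt hφle h1y
    · -- integral over closed ball tends to 1
      have heq : ∀ y : ℝ, 0 < y →
          (∫ t in Metric.closedBall x 1, φ y t) =
            (1 / Real.pi) * (Real.arctan (1 / y) - Real.arctan (-1 / y)) := by
        intro y hy
        have h1 : (∫ t in Metric.closedBall x 1, φ y t) = ∫ t in (x - 1)..(x + 1), φ y t := by
          rw [Real.closedBall_eq_Icc, integral_Icc_eq_integral_Ioc,
            ← intervalIntegral.integral_of_le (by linarith)]
        rw [h1]
        have hderiv : ∀ t ∈ Set.uIcc (x - 1) (x + 1),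
            HasDerivAt (fun t : ℝ => (1 / Real.pi) * Real.arctan ((t - x) / y)) (φ y t) t := by
          intro t _
          have h2 : HasDerivAt (fun t : ℝ => (t - x) / y) (1 / y) t := by
            simpa using ((hasDerivAt_id t).sub_const x).div_const y
          have h3 := (Real.hasDerivAt_arctan ((t - x) / y)).comp t h2
          have h4 : HasDerivAt (fun t : ℝ => (1 / Real.pi) * Real.arctan ((t - x) / y))
              ((1 / Real.pi) * (1 / (1 + ((t - x) / y) ^ 2) * (1 / y))) t := h3.const_mul (1 / Real.pi)
          convert h4 using 1
          have hy' : y ≠ 0 := hy.ne'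
          have hden : (t - x) ^ 2 + y ^ 2 ≠ 0 := by positivity
          simp only [hφdef]
          field_simp
          ring
        have hcont : IntervalIntegrable (φ y) volume (x - 1) (x + 1) := by
          apply Continuous.intervalIntegrable
          have : ∀ t : ℝ, (t - x) ^ 2 + y ^ 2 ≠ 0 := fun t => by positivity
          exact continuous_const.mul ((continuous_const.div
            (by continuity) this))
        rw [intervalIntegral.integral_eq_sub_of_hasDerivAt hderiv hcont]
        rw [← mul_sub]
        congr 2 <;> ring_nf
      have hlim : Tendsto (fun y : ℝ =>
          (1 / Real.pi) * (Real.arctan (1 / y) - Real.arctan (-1 / y)))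
          (nhdsWithin 0 (Set.Ioi 0)) (nhds 1) := by
        have htop : Tendsto (fun y : ℝ => 1 / y) (nhdsWithin 0 (Set.Ioi 0)) atTop := by
          simpa [one_div] using tendsto_inv_nhdsGT_zero (𝕜 := ℝ)
        have hbot : Tendsto (fun y : ℝ => -1 / y) (nhdsWithin 0 (Set.Ioi 0)) atBot := by
          have h := tendsto_neg_atTop_atBot.comp htop
          refine h.congr fun y => ?_
          simp [Function.comp, neg_div]
        have ha : Tendsto (fun y : ℝ => Real.arctan (1 / y))
            (nhdsWithin 0 (Set.Ioi 0)) (nhds (Real.pi / 2)) :=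
          (tendsto_nhds_of_tendsto_nhdsWithin Real.tendsto_arctan_atTop).comp htop
        have hb : Tendsto (fun y : ℝ => Real.arctan (-1 / y))
            (nhdsWithin 0 (Set.Ioi 0)) (nhds (-(Real.pi / 2))) :=
          (tendsto_nhds_of_tendsto_nhdsWithin Real.tendsto_arctan_atBot).comp hbot
        have := (ha.sub hb).const_mul (1 / Real.pi)
        have hval : (1 / Real.pi) * (Real.pi / 2 - -(Real.pi / 2)) = 1 := by
          field_simp
          ring
        rw [hval] at this
        exact this
      refine hlim.congr' ?_
      filter_upwards [self_mem_nhdsWithin] with y hy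
      exact (heq y hy).symm
    · -- a.e. strong measurability
      filter_upwards [self_mem_nhdsWithin] with y hy
      have hy' : (0 : ℝ) < y := hy
      have : ∀ t : ℝ, (t - x) ^ 2 + y ^ 2 ≠ 0 := fun t => by positivity
      exact (continuous_const.mul (continuous_const.div (by continuity) this)).aestronglyMeasurable
    · exact hf_int
    · exact hf_cont.tendsto x
  -- identify the two expressions
  refine key.congr' ?_
  filter_upwards [self_mem_nhdsWithin] with y hy
  have hy' : (0 : ℝ) < y := hy
  set z : ℂ := (x : ℂ) + (y : ℂ) * Complex.I with hz
  have hzim : z.im = y := by simp [hz]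
  have hSz : S z = ∫ t : ℝ, (f t : ℂ) / ((t : ℂ) - z) := hS z (by rw [hzim]; exact hy')
  have hzne : ∀ t : ℝ, ((t : ℂ) - z) ≠ 0 := by
    intro t h
    have : ((t : ℂ) - z).im = 0 := by rw [h]; simp
    simp [hz] at this
    exact hy'.ne' this
  have hintC : Integrable (fun t : ℝ => (f t : ℂ) / ((t : ℂ) - z)) := by
    have hcont : Continuous fun t : ℝ => (f t : ℂ) / ((t : ℂ) - z) :=
      (Complex.continuous_ofReal.comp hf_cont).div (by continuity) hzne
    refine (hf_int.abs.const_mul y⁻¹).mono' hcont.aestronglyMeasurable ?_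
    filter_upwards with t
    rw [norm_div]
    have h1 : ‖(f t : ℂ)‖ = |f t| := by simp [Complex.norm_real]
    have h2 : y ≤ ‖(t : ℂ) - z‖ := by
      have := Complex.abs_im_le_norm ((t : ℂ) - z)
      have him : ((t : ℂ) - z).im = -y := by simp [hz]
      rw [him] at this
      simpa [abs_of_pos hy'] using this
    rw [h1]
    rw [div_eq_inv_mul]
    apply mul_le_mul_of_nonneg_right _ (abs_nonneg _)
    exact inv_anti₀ hy' h2
  have him : ∀ t : ℝ, ((f t : ℂ) / ((t : ℂ) - z)).im = f t * (y / ((t - x) ^ 2 + y ^ 2)) := by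
    intro t
    rw [Complex.div_im]
    have hns : Complex.normSq ((t : ℂ) - z) = (t - x) ^ 2 + y ^ 2 := by
      simp [Complex.normSq_apply, hz]
      ring
    rw [hns]
    simp [hz]
    ring
  symm
  calc (1 / Real.pi) * (S z).im
      = (1 / Real.pi) * ∫ t : ℝ, ((f t : ℂ) / ((t : ℂ) - z)).im := by
        have h := (Complex.imCLM.integral_comp_comm hintC).symm
        simp only [Complex.imCLM_apply] at h
        rw [hSz, h]
    _ = (1 / Real.pi) * ∫ t : ℝ, f t * (y / ((t - x) ^ 2 + y ^ 2)) := by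
        congr 1
        exact integral_congr_ae (Filter.Eventually.of_forall him)
    _ = ∫ t : ℝ, φ y t • f t := by
        rw [← integral_const_mul]
        congr 1
        funext t
        simp only [hφdef, smul_eq_mul]
        ring
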